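/- Let n ≥ 1, z ∈ ℂ∖ℝ, and let U ⊆ ℂ be open with z ∈ U and conj(z) ∈ U. Suppose φ̃, φ̂ : ℂ∖{z} → Mₙ(ℂ) are holomorphic, each satisfies the reality condition φ(conj(λ))* φ(λ) = I for all λ ∉ {z, conj(z)}, and each tends to the identity matrix as |λ| → ∞. Suppose ψ̃, ψ̂ : U → Mₙ(ℂ) are holomorphic, ψ̃(λ) is invertible for every λ ∈ U, and ψ̂(λ)·ψ̃(λ)⁻¹ = φ̂(λ)·φ̃(λ)⁻¹ for all λ ∈ U∖{z, conj(z)}. Then φ̂(λ) = φ̃(λ) for all λ ∈ ℂ∖{z}, and ψ̂(λ) = ψ̃(λ) for all λ ∈ U. -/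

import Mathlib

open Matrix Complex Filter

noncomputable section

/-- A Hermitian projection of ℂⁿ: a matrix with π* = π and π² = π. -/
def IsHermitianProj {n : ℕ} (π : Matrix (Fin n) (Fin n) ℂ) : Prop :=
  πᴴ = π ∧ π * π = π

/-- The simple element g_{z,π}(λ) = I + ((z - conj z)/(λ - z))·(I - π). -/
def simpleElt {n : ℕ} (z : ℂ) (π : Matrix (Fin n) (Fin n) ℂ) (lam : ℂ) :
    Matrix (Fin n) (Fin n) ℂ :=
  1 + ((z - (starRingEnd ℂ) z) / (lam - z)) • (1 - π)

/-- The range of the linear map ℂⁿ → ℂⁿ defined by a matrix. -/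
def mrange {n m : ℕ} (A : Matrix (Fin n) (Fin m) ℂ) :
    Submodule ℂ (EuclideanSpace ℂ (Fin n)) :=
  LinearMap.range (Matrix.toEuclideanLin A)

section aux
lemma conj_conj_hasDerivAt' {f : ℂ → ℂ} {d x : ℂ} (hf : HasDerivAt f d ((starRingEnd ℂ) x)) :
    HasDerivAt (fun lam => (starRingEnd ℂ) (f ((starRingEnd ℂ) lam))) ((starRingEnd ℂ) d) x := by
  rw [hasDerivAt_iff_isLittleO] at hf ⊢
  have hconj : Filter.Tendsto (starRingEnd ℂ) (nhds x) (nhds ((starRingEnd ℂ) x)) :=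
    (Complex.continuous_conj).tendsto x
  have h1 := hf.comp_tendsto hconj
  have h2 : (fun y => (starRingEnd ℂ) (f ((starRingEnd ℂ) y)) - (starRingEnd ℂ) (f ((starRingEnd ℂ) x))
      - (y - x) • (starRingEnd ℂ) d) =O[nhds x]
      (fun y => f ((starRingEnd ℂ) y) - f ((starRingEnd ℂ) x) - ((starRingEnd ℂ) y - (starRingEnd ℂ) x) • d) := by
    apply Asymptotics.isBigO_of_le
    intro y
    have : (starRingEnd ℂ) (f ((starRingEnd ℂ) y)) - (starRingEnd ℂ) (f ((starRingEnd ℂ) x))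
      - (y - x) • (starRingEnd ℂ) d = (starRingEnd ℂ) (f ((starRingEnd ℂ) y) - f ((starRingEnd ℂ) x) - ((starRingEnd ℂ) y - (starRingEnd ℂ) x) • d) := by
      simp only [map_sub, smul_eq_mul, _root_.map_mul, Complex.conj_conj]
    rw [this, Complex.norm_conj]
  have h3 : (fun y : ℂ => (starRingEnd ℂ) y - (starRingEnd ℂ) x) =O[nhds x] (fun y => y - x) := by
    apply Asymptotics.isBigO_of_le
    intro y
    simp [← map_sub, Complex.norm_conj]
  exact (h2.trans_isLittleO h1).trans_isBigO h3

lemma conj_conj_diffAt' {f : ℂ → ℂ} {x : ℂ} (hf : DifferentiableAt ℂ f ((starRingEnd ℂ) x)) :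
    DifferentiableAt ℂ (fun lam => (starRingEnd ℂ) (f ((starRingEnd ℂ) lam))) x :=
  (conj_conj_hasDerivAt' hf.hasDerivAt).differentiableAt

lemma det_diffAt' {n : ℕ} {M : ℂ → Matrix (Fin n) (Fin n) ℂ} {x : ℂ}
    (h : ∀ i j, DifferentiableAt ℂ (fun l => M l i j) x) :
    DifferentiableAt ℂ (fun l => (M l).det) x := by
  simp only [Matrix.det_apply']
  apply DifferentiableAt.fun_sum
  intro σ _
  exact (DifferentiableAt.fun_finsetProd (fun i _ => h (σ i) i)).const_mul _

lemma inv_entry_diffAt' {n : ℕ} {M : ℂ → Matrix (Fin n) (Fin n) ℂ} {x : ℂ}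
    (h : ∀ i j, DifferentiableAt ℂ (fun l => M l i j) x)
    (hdet : IsUnit (M x)) (i j : Fin n) :
    DifferentiableAt ℂ (fun l => (M l)⁻¹ i j) x := by
  have hd : (M x).det ≠ 0 := ((Matrix.isUnit_iff_isUnit_det _).mp hdet).ne_zero
  have : (fun l => (M l)⁻¹ i j) = fun l => ((M l).det)⁻¹ * (M l).adjugate i j := by
    funext l
    rw [Matrix.inv_def, Matrix.smul_apply, Ring.inverse_eq_inv', smul_eq_mul]
  rw [this]
  apply DifferentiableAt.mul
  · exact (det_diffAt' h).inv hd
  · simp only [Matrix.adjugate_apply]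
    apply det_diffAt'
    intro k l
    simp only [Matrix.updateRow_apply]
    by_cases hk : k = j
    · simp [hk]
    · simp only [if_neg hk]; exact h k l

lemma conj_cocompact' : Filter.Tendsto (starRingEnd ℂ) (Filter.cocompact ℂ) (Filter.cocompact ℂ) :=
  le_of_eq Complex.conjCLE.toHomeomorph.map_cocompact
end aux

/-- Uniqueness step in Theorem 6.1: if φ̃, φ̂ are holomorphic on ℂ∖{z}, satisfy the reality
condition off {z, conj z}, tend to I at ∞, and ψ̃, ψ̂ are holomorphic on U with ψ̃
invertible, then ψ̂ψ̃⁻¹ = φ̂φ̃⁻¹ on U∖{z, conj z} forces φ̂ = φ̃ and ψ̂ = ψ̃. -/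
theorem statement12 {n : ℕ} (hn : 1 ≤ n) (z : ℂ) (hz : z.im ≠ 0)
    (U : Set ℂ) (hU : IsOpen U) (hzU : z ∈ U) (hzcU : (starRingEnd ℂ) z ∈ U)
    (φt φh : ℂ → Matrix (Fin n) (Fin n) ℂ)
    (hφthol : ∀ i j, DifferentiableOn ℂ (fun lam => φt lam i j) {z}ᶜ)
    (hφhhol : ∀ i j, DifferentiableOn ℂ (fun lam => φh lam i j) {z}ᶜ)
    (hφtreal : ∀ lam : ℂ, lam ≠ z → lam ≠ (starRingEnd ℂ) z →
      (φt ((starRingEnd ℂ) lam))ᴴ * φt lam = 1)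
    (hφhreal : ∀ lam : ℂ, lam ≠ z → lam ≠ (starRingEnd ℂ) z →
      (φh ((starRingEnd ℂ) lam))ᴴ * φh lam = 1)
    (hφtinf : ∀ i j, Filter.Tendsto (fun lam => φt lam i j) (Filter.cocompact ℂ)
      (nhds ((1 : Matrix (Fin n) (Fin n) ℂ) i j)))
    (hφhinf : ∀ i j, Filter.Tendsto (fun lam => φh lam i j) (Filter.cocompact ℂ)
      (nhds ((1 : Matrix (Fin n) (Fin n) ℂ) i j)))
    (ψt ψh : ℂ → Matrix (Fin n) (Fin n) ℂ)
    (hψthol : ∀ i j, DifferentiableOn ℂ (fun lam => ψt lam i j) U)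
    (hψhhol : ∀ i j, DifferentiableOn ℂ (fun lam => ψh lam i j) U)
    (hψtinv : ∀ lam ∈ U, IsUnit (ψt lam))
    (heq : ∀ lam ∈ U, lam ≠ z → lam ≠ (starRingEnd ℂ) z →
      ψh lam * (ψt lam)⁻¹ = φh lam * (φt lam)⁻¹) :
    (∀ lam : ℂ, lam ≠ z → φh lam = φt lam) ∧ (∀ lam ∈ U, ψh lam = ψt lam) := by
  classical
  set zc := (starRingEnd ℂ) z with hzc
  have hzzc : z ≠ zc := by
    intro h
    apply hz
    have := congrArg Complex.im h
    simp [hzc, Complex.conj_im] at this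
    linarith [this]
  set S : Set ℂ := {z, zc}ᶜ with hS
  have hSopen : IsOpen S := (Set.toFinite {z, zc}).isClosed.isOpen_compl
  have hmemS : ∀ {l : ℂ}, l ∈ S ↔ l ≠ z ∧ l ≠ zc := by
    intro l; simp [hS, not_or]
  -- inverse of φt
  have hφtinv : ∀ l : ℂ, l ≠ z → l ≠ zc → (φt l)⁻¹ = (φt ((starRingEnd ℂ) l))ᴴ := by
    intro l h1 h2
    exact Matrix.inv_eq_left_inv (hφtreal l h1 h2)
  -- the glued function
  set g : ℂ → Matrix (Fin n) (Fin n) ℂ :=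
    fun l => if l ∈ U then ψh l * (ψt l)⁻¹ else φh l * (φt ((starRingEnd ℂ) l))ᴴ with hg
  have hUeq : ∀ l ∈ U, g l = ψh l * (ψt l)⁻¹ := by
    intro l hl; simp [hg, hl]
  have hSeq : ∀ l ∈ S, g l = φh l * (φt ((starRingEnd ℂ) l))ᴴ := by
    intro l hl
    obtain ⟨h1, h2⟩ := hmemS.mp hl
    by_cases hlU : l ∈ U
    · simp only [hg, if_pos hlU]
      rw [heq l hlU h1 h2, hφtinv l h1 h2]
    · simp [hg, hlU]
  -- differentiability of each entry of g
  have hgdiff : ∀ i j, Differentiable ℂ (fun l => g l i j) := by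
    intro i j x
    by_cases hx : x ∈ U
    · have h1 : DifferentiableAt ℂ (fun l => (ψh l * (ψt l)⁻¹) i j) x := by
        simp only [Matrix.mul_apply]
        apply DifferentiableAt.fun_sum
        intro k _
        apply DifferentiableAt.mul
        · exact (hψhhol i k).differentiableAt (hU.mem_nhds hx)
        · exact inv_entry_diffAt'
            (fun a b => (hψthol a b).differentiableAt (hU.mem_nhds hx)) (hψtinv x hx) k j
      apply h1.congr_of_eventuallyEq
      filter_upwards [hU.mem_nhds hx] with l hl
      simp only [hUeq l hl]
    · have hxS : x ∈ S := by
        rw [hmemS]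
        constructor
        · rintro rfl; exact hx hzU
        · rintro rfl; exact hx hzcU
      obtain ⟨hx1, hx2⟩ := hmemS.mp hxS
      have h1 : DifferentiableAt ℂ (fun l => (φh l * (φt ((starRingEnd ℂ) l))ᴴ) i j) x := by
        simp only [Matrix.mul_apply, Matrix.conjTranspose_apply]
        apply DifferentiableAt.fun_sum
        intro k _
        apply DifferentiableAt.mul
        · exact (hφhhol i k).differentiableAt (isOpen_compl_singleton.mem_nhds hx1)
        · show DifferentiableAt ℂ (fun y => (starRingEnd ℂ) (φt ((starRingEnd ℂ) y) j k)) x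
          refine conj_conj_diffAt' (f := fun w => φt w j k) ?_
          apply (hφthol j k).differentiableAt
          apply isOpen_compl_singleton.mem_nhds
          simp only [Set.mem_compl_iff, Set.mem_singleton_iff]
          intro h
          apply hx2
          rw [hzc, ← h, Complex.conj_conj]
      apply h1.congr_of_eventuallyEq
      filter_upwards [hSopen.mem_nhds hxS] with l hl
      simp only [hSeq l hl]
  -- cocompact limit of each entry of g
  have hglim : ∀ i j, Filter.Tendsto (fun l => g l i j) (Filter.cocompact ℂ)
      (nhds ((1 : Matrix (Fin n) (Fin n) ℂ) i j)) := by
    intro i j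
    have hmem : S ∈ Filter.cocompact ℂ := (Set.toFinite {z, zc}).isCompact.compl_mem_cocompact
    have h2 : Filter.Tendsto (fun l => (φh l * (φt ((starRingEnd ℂ) l))ᴴ) i j)
        (Filter.cocompact ℂ) (nhds ((1 : Matrix (Fin n) (Fin n) ℂ) i j)) := by
      simp only [Matrix.mul_apply, Matrix.conjTranspose_apply]
      have key : ∀ k, Filter.Tendsto (fun l => φh l i k * (starRingEnd ℂ) (φt ((starRingEnd ℂ) l) j k))
          (Filter.cocompact ℂ)
          (nhds ((1 : Matrix (Fin n) (Fin n) ℂ) i k * (starRingEnd ℂ) ((1 : Matrix (Fin n) (Fin n) ℂ) j k))) := by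
        intro k
        exact (hφhinf i k).mul ((Complex.continuous_conj.tendsto _).comp
          ((hφtinf j k).comp conj_cocompact'))
      have := tendsto_finset_sum Finset.univ (fun k _ => key k)
      have hval : ∑ k, (1 : Matrix (Fin n) (Fin n) ℂ) i k * (starRingEnd ℂ) ((1 : Matrix (Fin n) (Fin n) ℂ) j k) = (1 : Matrix (Fin n) (Fin n) ℂ) i j := by
        by_cases hij : i = j <;>
          simp [hij, Matrix.one_apply, apply_ite (starRingEnd ℂ), Finset.sum_ite_eq, eq_comm]
      rw [← hval]
      exact this
    exact h2.congr' (by filter_upwards [hmem] with l hl; rw [hSeq l hl])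
  -- Liouville
  have hgone : ∀ l, g l = 1 := by
    intro l
    ext i j
    exact (hgdiff i j).apply_eq_of_tendsto_cocompact l (hglim i j)
  -- conclusion on S
  have hφS : ∀ l ∈ S, φh l = φt l := by
    intro l hl
    obtain ⟨h1, h2⟩ := hmemS.mp hl
    have hB := hφtreal l h1 h2
    have hA : φh l * (φt ((starRingEnd ℂ) l))ᴴ = 1 := by rw [← hSeq l hl, hgone l]
    calc φh l = φh l * ((φt ((starRingEnd ℂ) l))ᴴ * φt l) := by rw [hB, mul_one]
    _ = (φh l * (φt ((starRingEnd ℂ) l))ᴴ) * φt l := by rw [mul_assoc]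
    _ = φt l := by rw [hA, one_mul]
  constructor
  · intro l hl
    by_cases hl2 : l = zc
    · subst hl2
      -- continuity argument at zc
      have hdense : Dense S := (Set.countable_insert.mpr (Set.countable_singleton _)).dense_compl ℂ
      have hne : (nhdsWithin zc S).NeBot :=
        mem_closure_iff_nhdsWithin_neBot.mp (hdense zc)
      ext i j
      have hzcz : zc ≠ z := Ne.symm hzzc
      have hmem' : ({z}ᶜ : Set ℂ) ∈ nhds zc := isOpen_compl_singleton.mem_nhds (by simpa using hzcz)
      have hc1 : Filter.Tendsto (fun l => φh l i j) (nhdsWithin zc S) (nhds (φh zc i j)) :=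
        (((hφhhol i j).differentiableAt hmem').continuousAt.continuousWithinAt).tendsto
      have hc2 : Filter.Tendsto (fun l => φt l i j) (nhdsWithin zc S) (nhds (φt zc i j)) :=
        (((hφthol i j).differentiableAt hmem').continuousAt.continuousWithinAt).tendsto
      have hc1' : Filter.Tendsto (fun l => φh l i j) (nhdsWithin zc S) (nhds (φt zc i j)) := by
        apply hc2.congr'
        filter_upwards [self_mem_nhdsWithin] with m hm
        rw [hφS m hm]
      exact tendsto_nhds_unique hc1 hc1'
    · exact hφS l (hmemS.mpr ⟨hl, hl2⟩)
  · intro l hl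
    have h1 : ψh l * (ψt l)⁻¹ = 1 := by rw [← hUeq l hl, hgone l]
    have h2 : (ψt l)⁻¹ * ψt l = 1 :=
      Matrix.nonsing_inv_mul _ ((Matrix.isUnit_iff_isUnit_det _).mp (hψtinv l hl))
    calc ψh l = ψh l * ((ψt l)⁻¹ * ψt l) := by rw [h2, mul_one]
    _ = (ψh l * (ψt l)⁻¹) * ψt l := by rw [mul_assoc]
    _ = ψt l := by rw [h1, one_mul]
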